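/- Let f be analytic on a neighborhood of the closed unit disk, f(0)=0, and suppose Re(z f'(z)/f(z)) > 0 for all z with 0 < |z| < 1 (where z f'(z)/f(z) extends analytically to 0 with value equal to the order of vanishing of f at 0, assumed to be 1). Then f is injective on the open unit disk. -/

import Mathlib

open Complex Metric Set Filter
open scoped Topology

noncomputable section StarlikeAux


private lemma glueIcc {a b c : ℝ} {h1 h2 : ℝ → ℂ} (hab : a ≤ b) (hbc : b ≤ c)
    (H1 : ContinuousOn h1 (Icc a b)) (H2 : ContinuousOn h2 (Icc b c)) (heq : h1 b = h2 b) :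
    ContinuousOn (fun v => if v ≤ b then h1 v else h2 v) (Icc a c) := by
  intro x hx
  rcases lt_trichotomy x b with hlt | heqx | hgt
  · have hmem : x ∈ Icc a b := ⟨hx.1, hlt.le⟩
    have hnb : 𝓝[Icc a c] x ≤ 𝓝[Icc a b] x := by
      have h1' : Iio b ∈ 𝓝[Icc a c] x :=
        mem_nhdsWithin_of_mem_nhds (Iio_mem_nhds hlt)
      calc 𝓝[Icc a c] x = 𝓝[Icc a c ∩ Iio b] x := (nhdsWithin_inter_of_mem' h1').symm
        _ ≤ 𝓝[Icc a b] x := nhdsWithin_mono _ (fun y hy => ⟨hy.1.1, hy.2.le⟩)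
    have hcw : ContinuousWithinAt h1 (Icc a c) x := (H1 x hmem).mono_left hnb
    refine hcw.congr_of_eventuallyEq ?_ (by rw [if_pos hlt.le])
    filter_upwards [mem_nhdsWithin_of_mem_nhds (Iio_mem_nhds hlt)] with y hy
    rw [if_pos (mem_Iio.1 hy).le]
  · subst heqx
    have hsub : Icc a c ⊆ Icc a x ∪ Icc x c := fun y hy =>
      (le_total y x).imp (fun h => ⟨hy.1, h⟩) (fun h => ⟨h, hy.2⟩)
    refine ContinuousWithinAt.mono ?_ hsub
    have hb1 : ContinuousWithinAt h1 (Icc a x) x := H1 x ⟨hab, le_refl x⟩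
    have hb2 : ContinuousWithinAt h2 (Icc x c) x := H2 x ⟨le_refl x, hbc⟩
    have c1 : ContinuousWithinAt (fun v => if v ≤ x then h1 v else h2 v) (Icc a x) x :=
      hb1.congr (fun y hy => by rw [if_pos hy.2]) (by rw [if_pos (le_refl x)])
    have c2 : ContinuousWithinAt (fun v => if v ≤ x then h1 v else h2 v) (Icc x c) x := by
      refine hb2.congr (fun y hy => ?_) (by rw [if_pos (le_refl x)]; exact heq)
      rcases eq_or_lt_of_le hy.1 with h | h
      · rw [← h, if_pos (le_refl x)]; exact heq
      · rw [if_neg (not_le.2 h)]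
    unfold ContinuousWithinAt at c1 c2 ⊢
    rw [nhdsWithin_union]
    exact tendsto_sup.2 ⟨c1, c2⟩
  · have hmem : x ∈ Icc b c := ⟨hgt.le, hx.2⟩
    have hnb : 𝓝[Icc a c] x ≤ 𝓝[Icc b c] x := by
      have h1' : Ioi b ∈ 𝓝[Icc a c] x :=
        mem_nhdsWithin_of_mem_nhds (Ioi_mem_nhds hgt)
      calc 𝓝[Icc a c] x = 𝓝[Icc a c ∩ Ioi b] x := (nhdsWithin_inter_of_mem' h1').symm
        _ ≤ 𝓝[Icc b c] x := nhdsWithin_mono _ (fun y hy => ⟨hy.2.le, hy.1.2⟩)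
    have hcw : ContinuousWithinAt h2 (Icc a c) x := (H2 x hmem).mono_left hnb
    refine hcw.congr_of_eventuallyEq ?_ (by rw [if_neg (not_le.2 hgt)])
    filter_upwards [mem_nhdsWithin_of_mem_nhds (Ioi_mem_nhds hgt)] with y hy
    rw [if_neg (not_le.2 (mem_Ioi.1 hy))]

private lemma normSq_hasDeriv {σ : ℝ → ℂ} {d : ℂ} {v : ℝ} (h : HasDerivAt σ d v) :
    HasDerivAt (fun t => Complex.normSq (σ t)) (2 * (d * (starRingEnd ℂ) (σ v)).re) v := by
  have hre : HasDerivAt (fun t => (σ t).re) d.re v := by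
    exact Complex.reCLM.hasFDerivAt.comp_hasDerivAt v h
  have him : HasDerivAt (fun t => (σ t).im) d.im v := by
    exact Complex.imCLM.hasFDerivAt.comp_hasDerivAt v h
  have H := (hre.mul hre).add (him.mul him)
  simp only [Complex.normSq_apply]
  convert H using 1
  · rfl
  · rfl
  · rfl
  simp only [Complex.mul_re, Complex.conj_re, Complex.conj_im]
  ring


private lemma liftUnique {f : ℂ → ℂ}
    (hsd : ∀ a ∈ ball (0:ℂ) 1, HasStrictDerivAt f (deriv f a) a)
    (hd : ∀ a ∈ ball (0:ℂ) 1, deriv f a ≠ 0)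
    {u : ℝ} (hu : u ≤ 1) {σ τ : ℝ → ℂ}
    (hσ : ContinuousOn σ (Icc u 1)) (hτ : ContinuousOn τ (Icc u 1))
    (hσb : ∀ v ∈ Icc u 1, σ v ∈ ball (0:ℂ) 1)
    (hτb : ∀ v ∈ Icc u 1, τ v ∈ ball (0:ℂ) 1)
    (hfeq : ∀ v ∈ Icc u 1, f (σ v) = f (τ v))
    (h0 : σ u = τ u) : σ 1 = τ 1 := by
  set C : Set ℝ := {t | t ∈ Icc u 1 ∧ σ t = τ t} with hC
  have hCclosed : IsClosed C := by
    have hcont : ContinuousOn (fun t => σ t - τ t) (Icc u 1) := hσ.sub hτ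
    have : C = Icc u 1 ∩ (fun t => σ t - τ t) ⁻¹' {0} := by
      ext t; simp [hC, sub_eq_zero]
    rw [this]
    exact hcont.preimage_isClosed_of_isClosed isClosed_Icc isClosed_singleton
  set E : Set ℝ := {t | t ∈ Icc u 1 ∧ Icc u t ⊆ C} with hE
  have huE : u ∈ E := by
    refine ⟨⟨le_refl u, hu⟩, fun t ht => ?_⟩
    have : t = u := le_antisymm ht.2 ht.1
    exact this ▸ ⟨⟨le_refl u, hu⟩, h0⟩
  have hEne : E.Nonempty := ⟨u, huE⟩
  have hEbdd : BddAbove E := ⟨1, fun t ht => ht.1.2⟩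
  set c := sSup E with hc
  have hcmem : c ∈ Icc u 1 := ⟨le_csSup hEbdd huE, csSup_le hEne (fun t ht => ht.1.2)⟩
  have hsub : Icc u c ⊆ C := by
    intro t ht
    rcases lt_or_eq_of_le ht.2 with h | h
    · obtain ⟨t', ht'E, htt'⟩ := exists_lt_of_lt_csSup hEne h
      exact ht'E.2 ⟨ht.1, htt'.le⟩
    · rw [h]
      rcases eq_or_lt_of_le hcmem.1 with h' | h'
      · rw [← h']; exact ⟨⟨le_refl u, hu⟩, h0⟩
      · have h1 : Ico u c ⊆ C := fun y hy => by
          obtain ⟨t', ht'E, htt'⟩ := exists_lt_of_lt_csSup hEne hy.2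
          exact ht'E.2 ⟨hy.1, htt'.le⟩
        have hcl : c ∈ closure (Ico u c) := by
          rw [closure_Ico h'.ne]; exact ⟨h'.le, le_refl c⟩
        exact hCclosed.closure_subset ((closure_mono h1) hcl)
  have hcC : c ∈ C := hsub ⟨hcmem.1, le_refl c⟩
  rcases eq_or_lt_of_le hcmem.2 with hc1 | hc1
  · have : (1:ℝ) ∈ C := hc1 ▸ hcC
    exact this.2
  · exfalso
    set a := σ c with ha
    have ha1 : a ∈ ball (0:ℂ) 1 := hσb c hcmem
    have hfe := (hsd a ha1).hasStrictFDerivAt_equiv (hd a ha1)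
    set e := hfe.toOpenPartialHomeomorph f with he
    have hsrc : a ∈ e.source := hfe.mem_toOpenPartialHomeomorph_source
    have hτc : τ c = a := (hcC.2).symm
    have hev : ∀ᶠ t in 𝓝[Icc u 1] c, σ t ∈ e.source ∧ τ t ∈ e.source := by
      have t1 : Tendsto σ (𝓝[Icc u 1] c) (𝓝 a) := hσ c hcmem
      have t2 : Tendsto τ (𝓝[Icc u 1] c) (𝓝 a) := hτc ▸ hτ c hcmem
      exact (t1.eventually (e.open_source.eventually_mem hsrc)).and
        (t2.eventually (e.open_source.eventually_mem hsrc))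
    obtain ⟨η, hη, hballη⟩ := Metric.mem_nhdsWithin_iff.1 hev
    set t' := min 1 (c + η/2) with ht'
    have hct' : c < t' := lt_min hc1 (by linarith)
    have ht'1 : t' ≤ 1 := min_le_left _ _
    have ht'E : t' ∈ E := by
      refine ⟨⟨hcmem.1.trans hct'.le, ht'1⟩, fun t ht => ?_⟩
      rcases le_or_gt t c with h | h
      · exact hsub ⟨ht.1, h⟩
      · have htI : t ∈ Icc u 1 := ⟨ht.1, ht.2.trans ht'1⟩
        have hdist : t ∈ Metric.ball c η := by
          rw [Metric.mem_ball, Real.dist_eq, abs_of_pos (by linarith)]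
          have : t ≤ c + η/2 := ht.2.trans (min_le_right _ _)
          linarith
        have hmem := hballη ⟨hdist, htI⟩
        refine ⟨htI, e.injOn hmem.1 hmem.2 ?_⟩
        have : e (σ t) = f (σ t) := rfl
        have h2 : e (τ t) = f (τ t) := rfl
        rw [this, h2]
        exact hfeq t htI
    have : t' ≤ c := le_csSup hEbdd ht'E
    exact absurd this (not_le.2 hct')

private lemma signKey {f : ℂ → ℂ} (hf0 : f 0 = 0)
    (hst : ∀ z : ℂ, 0 < ‖z‖ → ‖z‖ < 1 →
      0 < (z * deriv f z / f z).re)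
    {b w : ℂ} {v : ℝ} (hb1 : b ∈ ball (0:ℂ) 1) (hbne : b ≠ 0)
    (hv : 0 < v) (hfb : f b = (v:ℂ) * w) (hwne : w ≠ 0) (hdb : deriv f b ≠ 0) :
    0 ≤ ((deriv f b)⁻¹ * w * (starRingEnd ℂ) b).re := by
  have hfbne : f b ≠ 0 := by
    rw [hfb]; exact mul_ne_zero (Complex.ofReal_ne_zero.2 hv.ne') hwne
  set p := b * deriv f b / f b with hpdef
  have hp : 0 < p.re := hst b (norm_pos_iff.mpr hbne) (by
    rw [mem_ball_zero_iff] at hb1; simpa using hb1)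
  have hvne : (v:ℂ) ≠ 0 := Complex.ofReal_ne_zero.2 hv.ne'
  have hX : (deriv f b)⁻¹ * w * (starRingEnd ℂ) b = ((Complex.normSq b / v : ℝ):ℂ) * p⁻¹ := by
    have hps : p⁻¹ = f b / (b * deriv f b) := by rw [hpdef, inv_div]
    rw [hps, hfb, Complex.ofReal_div]
    have hbb : (Complex.normSq b : ℂ) = b * (starRingEnd ℂ) b := (Complex.mul_conj b).symm
    rw [hbb]
    field_simp
  rw [hX, Complex.re_ofReal_mul]
  apply mul_nonneg (div_nonneg (Complex.normSq_nonneg b) hv.le)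
  rw [Complex.inv_re]
  exact div_nonneg hp.le (Complex.normSq_nonneg p)

private lemma liftExists {f : ℂ → ℂ}
    (hsd : ∀ a ∈ ball (0:ℂ) 1, HasStrictDerivAt f (deriv f a) a)
    (hd : ∀ a ∈ ball (0:ℂ) 1, deriv f a ≠ 0)
    (hf0 : f 0 = 0)
    (hst : ∀ z : ℂ, 0 < ‖z‖ → ‖z‖ < 1 →
      0 < (z * deriv f z / f z).re)
    (z0 : ℂ) (hz0 : z0 ∈ ball (0:ℂ) 1) (hfz0 : f z0 ≠ 0)
    (u : ℝ) (hu : u ∈ Ioc (0:ℝ) 1) :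
    ∃ σ : ℝ → ℂ, ContinuousOn σ (Icc u 1) ∧ σ 1 = z0 ∧
      ∀ v ∈ Icc u 1, f (σ v) = (v:ℂ) * f z0 ∧ ‖(σ v)‖ ≤ ‖z0‖ := by
  set w := f z0 with hw
  have hwne : w ≠ 0 := hfz0
  have hz0abs : ‖z0‖ < 1 := by
    rw [mem_ball_zero_iff] at hz0; simpa using hz0
  -- the set of parameters down to which a lift exists
  set B : Set ℝ := {t | t ∈ Ioc (0:ℝ) 1 ∧ ∃ σ : ℝ → ℂ, ContinuousOn σ (Icc t 1) ∧ σ 1 = z0 ∧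
      ∀ v ∈ Icc t 1, f (σ v) = (v:ℂ) * w ∧ ‖(σ v)‖ ≤ ‖z0‖} with hB
  have h1B : (1:ℝ) ∈ B := by
    refine ⟨⟨one_pos, le_refl 1⟩, fun _ => z0, continuousOn_const, rfl, fun v hv => ?_⟩
    have : v = 1 := le_antisymm hv.2 hv.1
    subst this
    exact ⟨by simp [hw], le_refl _⟩
  have hBne : B.Nonempty := ⟨1, h1B⟩
  have hBbdd : BddBelow B := ⟨0, fun t ht => ht.1.1.le⟩
  -- main claim : sInf B ≤ 0
  have hinf : ¬ (0 < sInf B) := by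
    intro hstar
    set us := sInf B with hus
    obtain ⟨useq, hanti, htend, hmem⟩ := exists_seq_tendsto_sInf hBne hBbdd
    choose σs hσcont hσone hσprop using fun n => (hmem n).2
    set ζ : ℕ → ℂ := fun n => σs n (useq n) with hζ
    have hζmem : ∀ n, ζ n ∈ closedBall (0:ℂ) (‖z0‖) := by
      intro n
      have hn1 : useq n ∈ Icc (useq n) 1 := ⟨le_refl _, (hmem n).1.2⟩
      have := (hσprop n (useq n) hn1).2
      rwa [mem_closedBall_zero_iff]
    obtain ⟨zs, hzsmem, φ, hφmono, hφtend⟩ :=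
      (isCompact_closedBall (0:ℂ) (‖z0‖)).tendsto_subseq hζmem
    have hzsball : zs ∈ ball (0:ℂ) 1 := by
      rw [mem_closedBall_zero_iff] at hzsmem
      rw [mem_ball_zero_iff]
      calc ‖zs‖ ≤ ‖z0‖ := hzsmem
        _ < 1 := hz0abs
    have huφ : Tendsto (fun k => useq (φ k)) atTop (𝓝 us) :=
      htend.comp hφmono.tendsto_atTop
    have hfzs : f zs = (us:ℂ) * w := by
      have hcf : ContinuousAt f zs := (hsd zs hzsball).hasDerivAt.continuousAt
      have t1 : Tendsto (fun k => f (ζ (φ k))) atTop (𝓝 (f zs)) := hcf.tendsto.comp hφtend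
      have t2 : Tendsto (fun k => f (ζ (φ k))) atTop (𝓝 ((us:ℂ) * w)) := by
        have heqf : ∀ k, f (ζ (φ k)) = ((useq (φ k) : ℝ):ℂ) * w := fun k =>
          (hσprop (φ k) (useq (φ k)) ⟨le_refl _, (hmem (φ k)).1.2⟩).1
        simp only [heqf]
        exact ((Complex.continuous_ofReal.tendsto us).comp huφ).mul tendsto_const_nhds
      exact tendsto_nhds_unique t1 t2
    have huspos : (0:ℝ) < us := hstar
    have hzsne : zs ≠ 0 := by
      intro h
      rw [h, hf0] at hfzs
      exact (mul_ne_zero (Complex.ofReal_ne_zero.2 huspos.ne') hwne) hfzs.symm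
    -- local inverse at zs
    have hfe := (hsd zs hzsball).hasStrictFDerivAt_equiv (hd zs hzsball)
    set e := hfe.toOpenPartialHomeomorph f with he
    have hsrc : zs ∈ e.source := hfe.mem_toOpenPartialHomeomorph_source
    have htgt : f zs ∈ e.target := e.map_source hsrc
    set Ψ : ℝ → ℂ := fun v => e.symm ((v:ℂ) * w) with hΨ
    have hΨus : Ψ us = zs := by
      show e.symm ((us:ℂ) * w) = zs
      rw [← hfzs]
      exact e.left_inv hsrc
    have hEv : ∀ᶠ v : ℝ in 𝓝 us, ((v:ℂ) * w ∈ e.target ∧ Ψ v ∈ ball (0:ℂ) 1) := by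
      have hc1 : ContinuousAt (fun v : ℝ => (v:ℂ) * w) us :=
        (Complex.continuous_ofReal.mul continuous_const).continuousAt
      have htgt' : (us:ℂ) * w ∈ e.target := hfzs ▸ htgt
      have hev1 : ∀ᶠ v : ℝ in 𝓝 us, (v:ℂ) * w ∈ e.target :=
        hc1.eventually_mem (e.open_target.mem_nhds htgt')
      have hc2 : ContinuousAt Ψ us := by
        have hsc : ContinuousAt (⇑e.symm) ((us:ℂ) * w) :=
          e.continuousOn_symm.continuousAt (e.open_target.mem_nhds htgt')
        exact ContinuousAt.comp (x := us) hsc hc1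
      have hev2 : ∀ᶠ v : ℝ in 𝓝 us, Ψ v ∈ ball (0:ℂ) 1 := by
        apply hc2.eventually_mem
        rw [hΨus]
        exact isOpen_ball.mem_nhds hzsball
      exact hev1.and hev2
    obtain ⟨η0, hη0, hη0p⟩ := Metric.eventually_nhds_iff.1 hEv
    set η := min (η0/2) (us/2) with hη
    have hηpos : 0 < η := lt_min (by linarith) (by linarith)
    -- pick an index far along the subsequence
    have hk1 : ∀ᶠ k in atTop, useq (φ k) < us + η :=
      huφ.eventually_lt_const (by linarith)
    have hk2 : ∀ᶠ k in atTop, ζ (φ k) ∈ e.source :=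
      hφtend.eventually (e.open_source.eventually_mem hsrc)
    obtain ⟨k, hklt, hksrc⟩ := (hk1.and hk2).exists
    set N := φ k with hN
    set uN := useq N with huN
    have huN1 : uN ≤ 1 := (hmem N).1.2
    have husle : us ≤ uN := csInf_le hBbdd (hmem N)
    have huNlt : uN < us + η := hklt
    set u'' := us - η with hu''
    have hu''pos : 0 < u'' := by
      have : η ≤ us/2 := min_le_right _ _
      simp only [hu'']; linarith
    have hu''lt : u'' < us := by simp only [hu'']; linarith
    have hu''le : u'' ≤ uN := le_trans hu''lt.le husle
    -- all parameters in [u'', uN] satisfy the eventual conditions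
    have P1 : ∀ v ∈ Icc u'' uN, ((v:ℂ) * w ∈ e.target ∧ Ψ v ∈ ball (0:ℂ) 1) := by
      intro v hv
      apply hη0p
      have hηle : η ≤ η0/2 := min_le_left _ _
      rw [Real.dist_eq, abs_lt]
      have h1 : v ≤ uN := hv.2
      have h2 : us - η ≤ v := hv.1
      constructor <;> linarith
    have hΨcont : ContinuousOn Ψ (Icc u'' uN) := by
      apply e.continuousOn_symm.comp
        ((Complex.continuous_ofReal.mul continuous_const).continuousOn)
      exact fun v hv => (P1 v hv).1
    have hΨf : ∀ v ∈ Icc u'' uN, f (Ψ v) = (v:ℂ) * w := by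
      intro v hv
      exact e.right_inv (P1 v hv).1
    have hvpos : ∀ v : ℝ, v ∈ Icc u'' uN → 0 < v := fun v hv => lt_of_lt_of_le hu''pos hv.1
    have hΨne : ∀ v ∈ Icc u'' uN, Ψ v ≠ 0 := by
      intro v hv h
      have h2 := hΨf v hv
      rw [h, hf0] at h2
      exact (mul_ne_zero (Complex.ofReal_ne_zero.2 (hvpos v hv).ne') hwne) h2.symm
    have hΨderiv : ∀ v ∈ Ioo u'' uN, HasDerivAt Ψ ((deriv f (Ψ v))⁻¹ * w) v := by
      intro v hv
      have hvI : v ∈ Icc u'' uN := Ioo_subset_Icc_self hv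
      set b := Ψ v with hb
      have hbball : b ∈ ball (0:ℂ) 1 := (P1 v hvI).2
      have hbsrc : b ∈ e.source := e.map_target (P1 v hvI).1
      have hfb : f b = (v:ℂ) * w := hΨf v hvI
      have hgev : ∀ᶠ ζ' in 𝓝 b, e.symm (f ζ') = ζ' := by
        filter_upwards [e.open_source.eventually_mem hbsrc] with ζ' hζ'
        exact e.left_inv hζ'
      have hsymm : HasStrictDerivAt (⇑e.symm) ((deriv f b)⁻¹) (f b) :=
        (hsd b hbball).to_local_left_inverse (hd b hbball) hgev
      have hsymm' : HasStrictDerivAt (⇑e.symm) ((deriv f b)⁻¹) ((v:ℂ) * w) := hfb ▸ hsymm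
      have hmul : HasDerivAt (fun ζ' : ℂ => ζ' * w) w (v:ℂ) := hasDerivAt_mul_const w
      have houter : HasDerivAt (fun ζ' : ℂ => e.symm (ζ' * w)) ((deriv f b)⁻¹ * w) (v:ℂ) :=
        HasDerivAt.comp (v:ℂ) hsymm'.hasDerivAt hmul
      exact houter.comp_ofReal
    have hmono : MonotoneOn (fun v => Complex.normSq (Ψ v)) (Icc u'' uN) := by
      apply monotoneOn_of_deriv_nonneg (convex_Icc _ _)
      · exact Complex.continuous_normSq.comp_continuousOn hΨcont
      · intro v hv
        rw [interior_Icc] at hv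
        exact ((normSq_hasDeriv (hΨderiv v hv)).differentiableAt).differentiableWithinAt
      · intro v hv
        rw [interior_Icc] at hv
        have hD := normSq_hasDeriv (hΨderiv v hv)
        rw [hD.deriv]
        have hvI : v ∈ Icc u'' uN := Ioo_subset_Icc_self hv
        have hkey := signKey hf0 hst (P1 v hvI).2 (hΨne v hvI) (hvpos v hvI) (hΨf v hvI)
          hwne (hd _ (P1 v hvI).2)
        linarith
    have hjun : Ψ uN = ζ N := by
      have hfzN : f (ζ N) = (uN:ℂ) * w := (hσprop N uN ⟨le_refl _, huN1⟩).1
      show e.symm ((uN:ℂ) * w) = ζ N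
      rw [← hfzN]
      exact e.left_inv hksrc
    have hΨle : ∀ v ∈ Icc u'' uN, ‖(Ψ v)‖ ≤ ‖z0‖ := by
      intro v hv
      have h1 : Complex.normSq (Ψ v) ≤ Complex.normSq (Ψ uN) :=
        hmono hv ⟨hu''le, le_refl _⟩ hv.2
      have h2 : ‖(ζ N)‖ ≤ ‖z0‖ := (hσprop N uN ⟨le_refl _, huN1⟩).2
      rw [hjun] at h1
      calc ‖(Ψ v)‖ = Real.sqrt (Complex.normSq (Ψ v)) := Complex.norm_def _
        _ ≤ Real.sqrt (Complex.normSq (ζ N)) := Real.sqrt_le_sqrt h1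
        _ = ‖(ζ N)‖ := (Complex.norm_def _).symm
        _ ≤ ‖z0‖ := h2
    have hu''B : u'' ∈ B := by
      refine ⟨⟨hu''pos, le_trans hu''le huN1⟩,
        fun v => if v ≤ uN then Ψ v else σs N v, ?_, ?_, ?_⟩
      · exact glueIcc hu''le huN1 hΨcont (hσcont N) hjun
      · show (if (1:ℝ) ≤ uN then Ψ 1 else σs N 1) = z0
        by_cases h1N : (1:ℝ) ≤ uN
        · have huN1' : uN = 1 := le_antisymm huN1 h1N
          rw [if_pos h1N, show (1:ℝ) = uN from huN1'.symm, hjun]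
          show σs N (useq N) = z0
          rw [show useq N = uN from rfl, huN1']
          exact hσone N
        · rw [if_neg h1N]; exact hσone N
      · intro v hv
        by_cases hvN : v ≤ uN
        · refine ⟨?_, ?_⟩
          · show f (if v ≤ uN then Ψ v else σs N v) = _
            rw [if_pos hvN]; exact hΨf v ⟨hv.1, hvN⟩
          · show ‖(if v ≤ uN then Ψ v else σs N v)‖ ≤ _
            rw [if_pos hvN]; exact hΨle v ⟨hv.1, hvN⟩
        · have hvI : v ∈ Icc uN 1 := ⟨(not_le.1 hvN).le, hv.2⟩
          refine ⟨?_, ?_⟩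
          · show f (if v ≤ uN then Ψ v else σs N v) = _
            rw [if_neg hvN]; exact (hσprop N v hvI).1
          · show ‖(if v ≤ uN then Ψ v else σs N v)‖ ≤ _
            rw [if_neg hvN]; exact (hσprop N v hvI).2
    have hcontra : us ≤ u'' := csInf_le hBbdd hu''B
    linarith
  -- conclude
  have hlt : sInf B < u := lt_of_le_of_lt (not_lt.1 hinf) hu.1
  obtain ⟨u', hu'B, hu'lt⟩ := exists_lt_of_csInf_lt hBne hlt
  obtain ⟨σ, hσc, hσ1, hσp⟩ := hu'B.2
  exact ⟨σ, hσc.mono (fun v hv => ⟨le_trans hu'lt.le hv.1, hv.2⟩), hσ1,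
    fun v hv => hσp v ⟨le_trans hu'lt.le hv.1, hv.2⟩⟩

end StarlikeAux

/-- a starlike function is univalent: if `f` is analytic on a
neighborhood of the closed unit disk, `f(0) = 0`, `f'(0) = 1`, and
`Re(z f'(z)/f(z)) > 0` for `0 < |z| < 1`, then `f` is injective on the
open unit disk. -/
theorem stmt14 (f : ℂ → ℂ) (U : Set ℂ) (hU : IsOpen U)
    (hUD : closedBall (0:ℂ) 1 ⊆ U)
    (hf : DifferentiableOn ℂ f U)
    (hf0 : f 0 = 0) (hf'0 : deriv f 0 = 1)
    (hst : ∀ z : ℂ, 0 < ‖z‖ → ‖z‖ < 1 →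
      0 < (z * deriv f z / f z).re) :
    Set.InjOn f (ball (0:ℂ) 1) := by
  have han : AnalyticOnNhd ℂ f U := hf.analyticOnNhd hU
  have hball : ball (0:ℂ) 1 ⊆ U := fun z hz => hUD (ball_subset_closedBall hz)
  have hsd : ∀ a ∈ ball (0:ℂ) 1, HasStrictDerivAt f (deriv f a) a := by
    intro a ha
    obtain ⟨p, hp⟩ := han a (hball ha)
    exact hp.deriv ▸ hp.hasStrictDerivAt
  have habs : ∀ z : ℂ, z ∈ ball (0:ℂ) 1 → ‖z‖ < 1 := by
    intro z hz
    rw [mem_ball_zero_iff] at hz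
    exact hz
  have hne : ∀ z ∈ ball (0:ℂ) 1, z ≠ 0 → f z ≠ 0 := by
    intro z hz hz0 hfz
    have := hst z (norm_pos_iff.mpr hz0) (habs z hz)
    rw [hfz, div_zero] at this
    simp at this
  have hd : ∀ a ∈ ball (0:ℂ) 1, deriv f a ≠ 0 := by
    intro a ha hda
    by_cases h0 : a = 0
    · rw [h0, hf'0] at hda; exact one_ne_zero hda
    · have := hst a (norm_pos_iff.mpr h0) (habs a ha)
      rw [hda, mul_zero, zero_div] at this
      simp at this
  intro z1 hz1 z2 hz2 heqf
  by_cases hw0 : f z1 = 0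
  · have h1 : z1 = 0 := by
      by_contra h
      exact hne z1 hz1 h hw0
    have h2 : z2 = 0 := by
      by_contra h
      exact hne z2 hz2 h (heqf ▸ hw0)
    rw [h1, h2]
  · set w := f z1 with hw
    have hz1ne : z1 ≠ 0 := fun h => hw0 (h ▸ hf0)
    have hz2ne : z2 ≠ 0 := fun h => hw0 (by rw [heqf, h, hf0])
    have hfz2 : f z2 ≠ 0 := heqf ▸ hw0
    -- local injectivity at 0
    have h01 : (0:ℂ) ∈ ball (0:ℂ) 1 := mem_ball_self one_pos
    have hfe0 := (hsd 0 h01).hasStrictFDerivAt_equiv (hd 0 h01)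
    set e0 := hfe0.toOpenPartialHomeomorph f with he0
    have h0src : (0:ℂ) ∈ e0.source := hfe0.mem_toOpenPartialHomeomorph_source
    obtain ⟨ε, hεpos, hεsub⟩ := Metric.isOpen_iff.1 e0.open_source 0 h0src
    set r1 := max (‖z1‖) (‖z2‖) with hr1
    have hr1lt : r1 < 1 := max_lt (habs z1 hz1) (habs z2 hz2)
    -- choose a small parameter u
    have hchoice : ∃ u : ℝ, u ∈ Ioc (0:ℝ) 1 ∧
        ∀ z : ℂ, ‖z‖ ≤ r1 → f z = (u:ℂ) * w → ‖z‖ < ε := by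
      set K := closedBall (0:ℂ) r1 \ ball (0:ℂ) ε with hK
      rcases K.eq_empty_or_nonempty with hKe | hKne
      · refine ⟨1, ⟨one_pos, le_refl 1⟩, fun z hz _ => ?_⟩
        by_contra h
        have : z ∈ K := ⟨by rwa [mem_closedBall_zero_iff], by
          rw [mem_ball_zero_iff]; exact fun hlt => h hlt⟩
        rw [hKe] at this
        exact this
      · have hKcomp : IsCompact K := (isCompact_closedBall _ _).diff isOpen_ball
        have hKU : K ⊆ U := by
          intro z hz
          exact hUD (closedBall_subset_closedBall hr1lt.le hz.1)
        have hfc : ContinuousOn (fun z => ‖(f z)‖) K :=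
          continuous_norm.comp_continuousOn (hf.continuousOn.mono hKU)
        obtain ⟨zm, hzmK, hzmin⟩ := hKcomp.exists_isMinOn hKne hfc
        have hzmne : zm ≠ 0 := by
          intro h
          have : (0:ℂ) ∈ ball (0:ℂ) ε := mem_ball_self hεpos
          exact hzmK.2 (h ▸ this)
        have hzmball : zm ∈ ball (0:ℂ) 1 := by
          rw [mem_ball_zero_iff]
          exact lt_of_le_of_lt (mem_closedBall_zero_iff.1 hzmK.1) hr1lt
        have hm : 0 < ‖(f zm)‖ := norm_pos_iff.mpr (hne zm hzmball hzmne)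
        have hwpos : 0 < ‖w‖ := norm_pos_iff.mpr hw0
        set u := min 1 (‖(f zm)‖ / (2 * ‖w‖)) with hu
        have hupos : 0 < u := lt_min one_pos (by positivity)
        refine ⟨u, ⟨hupos, min_le_left _ _⟩, fun z hz hfz => ?_⟩
        by_contra h
        have hzK : z ∈ K := ⟨by rwa [mem_closedBall_zero_iff],
          fun hlt => h (mem_ball_zero_iff.1 hlt)⟩
        have hle : ‖(f zm)‖ ≤ ‖(f z)‖ := isMinOn_iff.1 hzmin z hzK
        have habsz : ‖(f z)‖ = u * ‖w‖ := by
          rw [hfz, norm_mul, Complex.norm_real, Real.norm_eq_abs, abs_of_pos hupos]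
        rw [habsz] at hle
        have hum : u ≤ ‖(f zm)‖ / (2 * ‖w‖) := min_le_right _ _
        have h2 : u * ‖w‖ ≤ ‖(f zm)‖ / 2 := by
          calc u * ‖w‖ ≤ (‖(f zm)‖ / (2 * ‖w‖)) * ‖w‖ :=
            mul_le_mul_of_nonneg_right hum (norm_nonneg w)
          _ = ‖(f zm)‖ / 2 := by field_simp
        linarith
    obtain ⟨u, huIoc, husmall⟩ := hchoice
    obtain ⟨σ, hσc, hσ1, hσp⟩ := liftExists hsd hd hf0 hst z1 hz1 hw0 u huIoc
    obtain ⟨τ, hτc, hτ1, hτp⟩ := liftExists hsd hd hf0 hst z2 hz2 hfz2 u huIoc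
    have huI : u ∈ Icc u 1 := ⟨le_refl u, huIoc.2⟩
    have hσu : ‖(σ u)‖ < ε := by
      refine husmall (σ u) (le_trans (hσp u huI).2 (le_max_left _ _)) ?_
      exact (hσp u huI).1
    have hτu : ‖(τ u)‖ < ε := by
      refine husmall (τ u) (le_trans (hτp u huI).2 (le_max_right _ _)) ?_
      rw [(hτp u huI).1, ← heqf]
    have hστu : σ u = τ u := by
      have hσsrc : σ u ∈ e0.source := hεsub (by rwa [mem_ball_zero_iff])
      have hτsrc : τ u ∈ e0.source := hεsub (by rwa [mem_ball_zero_iff])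
      refine e0.injOn hσsrc hτsrc ?_
      show f (σ u) = f (τ u)
      rw [(hσp u huI).1, (hτp u huI).1, ← heqf]
    have hσball : ∀ v ∈ Icc u 1, σ v ∈ ball (0:ℂ) 1 := by
      intro v hv
      rw [mem_ball_zero_iff]
      exact lt_of_le_of_lt (hσp v hv).2 (habs z1 hz1)
    have hτball : ∀ v ∈ Icc u 1, τ v ∈ ball (0:ℂ) 1 := by
      intro v hv
      rw [mem_ball_zero_iff]
      exact lt_of_le_of_lt (hτp v hv).2 (habs z2 hz2)
    have hfeq : ∀ v ∈ Icc u 1, f (σ v) = f (τ v) := by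
      intro v hv
      rw [(hσp v hv).1, (hτp v hv).1, ← heqf]
    have := liftUnique hsd hd huIoc.2 hσc hτc hσball hτball hfeq hστu
    rw [hσ1, hτ1] at this
    exact this
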